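/- If A(t) = t^p log(e+t)^(p-1+δ) with 1 < p < ∞ and δ > 0, then the Young function \bar{A}(t) = sup_{s>0} (st - A(s)) satisfies the B_{p'} integrability condition: ∫_1^∞ \bar{A}(t)/t^{p'} · dt/t < ∞, where p' = p/(p-1). -/

import Mathlib

open MeasureTheory Real Set Filter

/-- The normalized Luxemburg (Orlicz) norm of `v` over the set `E`:
`inf { λ > 0 : μ(E)⁻¹ ∫_E A(|v|/λ) dμ ≤ 1 }`. -/
noncomputable def luxNorm {X : Type*} [MeasurableSpace X] (μ : Measure X)
    (A : ℝ → ℝ) (E : Set X) (v : X → ℝ) : ℝ :=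
  sInf {l : ℝ | 0 < l ∧ ∫⁻ x in E, ENNReal.ofReal (A (|v x| / l)) ∂μ ≤ μ E}

/-- A Young function: continuous, convex, increasing on `[0,∞)`, vanishing at `0`,
with superlinear growth at infinity. -/
def IsYoung (A : ℝ → ℝ) : Prop :=
  ContinuousOn A (Set.Ici 0) ∧ ConvexOn ℝ (Set.Ici 0) A ∧ MonotoneOn A (Set.Ici 0) ∧
    A 0 = 0 ∧ Filter.Tendsto (fun t => A t / t) Filter.atTop Filter.atTop

namespace CompLogBump

/-- The concrete Young function. -/
noncomputable def A' (p δ s : ℝ) : ℝ := s ^ p * Real.log (Real.exp 1 + s) ^ (p - 1 + δ)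

/-- The set whose supremum is the complementary function. -/
def S (p δ t : ℝ) : Set ℝ := {y : ℝ | ∃ s : ℝ, 0 < s ∧ y = s * t - A' p δ s}

lemma one_le_logE {s : ℝ} (hs : 0 ≤ s) : 1 ≤ Real.log (Real.exp 1 + s) := by
  rw [Real.le_log_iff_exp_le (by positivity)]
  linarith

lemma A'_nonneg {p δ s : ℝ} (hs : 0 ≤ s) : 0 ≤ A' p δ s := by
  have h := one_le_logE hs
  unfold A'
  positivity

lemma rpow_le_A' {p δ s : ℝ} (hα : 0 ≤ p - 1 + δ) (hs : 0 ≤ s) : s ^ p ≤ A' p δ s := by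
  have h1 : (1:ℝ) ≤ Real.log (Real.exp 1 + s) ^ (p - 1 + δ) :=
    Real.one_le_rpow (one_le_logE hs) hα
  calc s ^ p = s ^ p * 1 := by ring
  _ ≤ A' p δ s := by
    unfold A'
    exact mul_le_mul_of_nonneg_left h1 (Real.rpow_nonneg hs p)

lemma crude {p δ t s : ℝ} (hp : 1 < p) (hδ : 0 < δ) (ht : 0 ≤ t) (hs : 0 < s) :
    s * t - A' p δ s ≤ t ^ (p / (p - 1)) := by
  have hpq : p.HolderConjugate (p / (p-1)) := Real.HolderConjugate.conjExponent hp
  have hy := Real.young_inequality_of_nonneg hs.le ht hpq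
  have h1 : s ^ p / p ≤ s ^ p := div_le_self (Real.rpow_nonneg hs.le p) hp.le
  have h2 : t ^ (p/(p-1)) / (p/(p-1)) ≤ t ^ (p/(p-1)) :=
    div_le_self (Real.rpow_nonneg ht _) hpq.symm.lt.le
  have h3 := rpow_le_A' (p := p) (δ := δ) (s := s) (by linarith) hs.le
  linarith

lemma bddAbove_S {p δ t : ℝ} (hp : 1 < p) (hδ : 0 < δ) (ht : 0 ≤ t) :
    BddAbove (S p δ t) := by
  refine ⟨t ^ (p / (p-1)), ?_⟩
  rintro y ⟨s, hs, rfl⟩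
  exact crude hp hδ ht hs

lemma nonempty_S (p δ t : ℝ) : (S p δ t).Nonempty :=
  ⟨1 * t - A' p δ 1, 1, one_pos, rfl⟩

lemma sSup_S_nonneg {p δ t : ℝ} (hp : 1 < p) (hδ : 0 < δ) (ht : 1 ≤ t) :
    0 ≤ sSup (S p δ t) := by
  set α := p - 1 + δ with hα
  set s := min 1 ((2:ℝ) ^ (-α / (p-1))) with hsdef
  have hs0 : 0 < s := lt_min one_pos (Real.rpow_pos_of_pos two_pos _)
  have hs1 : s ≤ 1 := min_le_left _ _
  have hlog2 : Real.log (Real.exp 1 + s) ≤ 2 := by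
    have h2e : (2:ℝ) ≤ Real.exp 1 := by
      have := Real.add_one_le_exp 1; linarith
    have : Real.exp 1 + s ≤ Real.exp 2 := by
      have : Real.exp 2 = Real.exp 1 * Real.exp 1 := by
        rw [← Real.exp_add]; norm_num
      nlinarith [Real.exp_pos 1]
    calc Real.log (Real.exp 1 + s) ≤ Real.log (Real.exp 2) :=
          Real.log_le_log (by positivity) this
    _ = 2 := Real.log_exp 2
  have hαpos : 0 < α := by rw [hα]; linarith
  have key : A' p δ s ≤ s * t := by
    have hL : Real.log (Real.exp 1 + s) ^ α ≤ 2 ^ α := by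
      refine Real.rpow_le_rpow ?_ hlog2 hαpos.le
      linarith [one_le_logE hs0.le]
    have hsp : s ^ p = s * s ^ (p-1) := by
      have h := Real.rpow_add hs0 1 (p-1)
      rw [Real.rpow_one, show (1:ℝ) + (p-1) = p by ring] at h
      exact h
    have hsp1 : s ^ (p-1) ≤ (2:ℝ) ^ (-α) := by
      have h1 : s ≤ (2:ℝ) ^ (-α/(p-1)) := min_le_right _ _
      have h2 : s ^ (p-1) ≤ ((2:ℝ) ^ (-α/(p-1))) ^ (p-1) :=
        Real.rpow_le_rpow hs0.le h1 (by linarith)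
      have h3 : ((2:ℝ) ^ (-α/(p-1))) ^ (p-1) = (2:ℝ) ^ (-α) := by
        rw [← Real.rpow_mul (by norm_num : (0:ℝ) ≤ 2)]
        congr 1
        exact div_mul_cancel₀ _ (by linarith : p - 1 ≠ 0)
      rw [h3] at h2; exact h2
    have hcalc : A' p δ s ≤ s := by
      have e1 : A' p δ s ≤ s ^ p * 2 ^ α :=
        mul_le_mul_of_nonneg_left hL (Real.rpow_nonneg hs0.le p)
      have e2 : s ^ p * 2 ^ α ≤ s * ((2:ℝ) ^ (-α) * 2 ^ α) := by
        rw [hsp, mul_assoc]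
        refine mul_le_mul_of_nonneg_left ?_ hs0.le
        exact mul_le_mul_of_nonneg_right hsp1 (Real.rpow_nonneg (by norm_num) α)
      have e3 : (2:ℝ) ^ (-α) * 2 ^ α = 1 := by
        rw [← Real.rpow_add two_pos]; simp
      rw [e3, mul_one] at e2
      exact e1.trans e2
    exact hcalc.trans (le_mul_of_one_le_right hs0.le ht)
  have : (0:ℝ) ≤ s * t - A' p δ s := by linarith
  exact this.trans (le_csSup (bddAbove_S hp hδ (by linarith)) ⟨s, hs0, rfl⟩)

lemma key (p δ : ℝ) (hp : 1 < p) (hδ : 0 < δ) :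
    ∃ C : ℝ, 0 < C ∧ ∃ T : ℝ, 3 ≤ T ∧ ∀ t, T ≤ t → ∀ s, 0 < s →
      s * t - A' p δ s ≤
        C * t ^ (p / (p - 1)) / Real.log (Real.exp 1 + t) ^ ((p - 1 + δ) / (p - 1)) := by
  have hp1 : (0:ℝ) < p - 1 := by linarith
  set r : ℝ := (p-1)⁻¹ with hrdef
  have hr : 0 < r := by positivity
  set α : ℝ := p - 1 + δ with hαdef
  have hα : 0 < α := by rw [hαdef]; linarith
  set β : ℝ := α / (p - 1) with hβdef
  have hβ : 0 < β := by positivity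
  set γ : ℝ := r / (4 * β) with hγdef
  have hγ : 0 < γ := by positivity
  set C : ℝ := max 1 ((r/4) ^ (-β)) with hCdef
  have hC : 0 < C := lt_of_lt_of_le one_pos (le_max_left _ _)
  have hev1 : ∀ᶠ x : ℝ in atTop, Real.log x ≤ x ^ γ := by
    filter_upwards [(isLittleO_log_rpow_atTop hγ).def one_pos,
      eventually_ge_atTop (1:ℝ)] with x hx hx1
    rw [one_mul, Real.norm_eq_abs, Real.norm_eq_abs,
      abs_of_nonneg (Real.log_nonneg hx1),
      abs_of_nonneg (Real.rpow_nonneg (by linarith) _)] at hx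
    exact hx
  have hev2 : ∀ᶠ t : ℝ in atTop, Real.log (Real.exp 1 + t) ≤ (Real.exp 1 + t) ^ γ :=
    (tendsto_atTop_add_const_left atTop (Real.exp 1) tendsto_id).eventually hev1
  obtain ⟨T0, hT0⟩ := eventually_atTop.mp hev2
  refine ⟨C, hC, max T0 3, le_max_right _ _, ?_⟩
  intro t ht s hs
  have ht3 : (3:ℝ) ≤ t := le_trans (le_max_right _ _) ht
  have ht0 : (0:ℝ) < t := by linarith
  have hte : Real.exp 1 ≤ t := by
    have := Real.exp_one_lt_d9; linarith
  set L : ℝ := Real.log (Real.exp 1 + t) with hLdef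
  have hL1 : 1 ≤ L := one_le_logE ht0.le
  have hL0 : 0 < L := by linarith
  have hpq : p.HolderConjugate (p / (p-1)) := Real.HolderConjugate.conjExponent hp
  have hq0 : 0 < p / (p - 1) := hpq.symm.pos
  -- L ≤ t ^ (r/(2 β))
  have hLt : L ≤ t ^ (r / (2 * β)) := by
    have h1 : L ≤ (Real.exp 1 + t) ^ γ := hT0 t (le_trans (le_max_left _ _) ht)
    have h2 : Real.exp 1 + t ≤ t * t := by nlinarith
    have h3 : (Real.exp 1 + t) ^ γ ≤ (t * t) ^ γ :=
      Real.rpow_le_rpow (by positivity) h2 hγ.le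
    have h4 : (t * t) ^ γ = t ^ (r / (2 * β)) := by
      rw [show t * t = t ^ (2:ℝ) by rw [show (2:ℝ) = ((2:ℕ):ℝ) by norm_num, Real.rpow_natCast]; ring, ← Real.rpow_mul ht0.le]
      congr 1
      rw [hγdef]
      field_simp
      ring
    linarith [h3, h4.le, h4.ge]
  have hE1 : L ^ β ≤ t ^ (r / 2) := by
    have h5 : L ^ β ≤ (t ^ (r / (2*β))) ^ β := Real.rpow_le_rpow hL0.le hLt hβ.le
    have h6 : (t ^ (r / (2*β))) ^ β = t ^ (r / 2) := by
      rw [← Real.rpow_mul ht0.le]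
      congr 1
      field_simp
    linarith [h6.le]
  set s₀ : ℝ := t ^ r / L ^ β with hs₀def
  have hLβ : (0:ℝ) < L ^ β := Real.rpow_pos_of_pos hL0 β
  by_cases hcase : s ≤ s₀
  · -- small s
    have hA := A'_nonneg (p := p) (δ := δ) hs.le
    have h7 : s * t ≤ s₀ * t := mul_le_mul_of_nonneg_right hcase ht0.le
    have h8 : s₀ * t = t ^ (p/(p-1)) / L ^ β := by
      rw [hs₀def, div_mul_eq_mul_div]
      congr 1
      rw [← Real.rpow_add_one ht0.ne']
      congr 1
      rw [hrdef]
      field_simp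
      ring
    have h9 : t ^ (p/(p-1)) / L ^ β ≤ C * t ^ (p/(p-1)) / L ^ β := by
      gcongr
      exact le_mul_of_one_le_left (Real.rpow_nonneg ht0.le _) (le_max_left _ _)
    linarith
  · -- large s
    push_neg at hcase
    have hs₀lb : t ^ (r/2) ≤ s₀ := by
      have h5 : t ^ r / t ^ (r/2) = t ^ (r/2) := by
        rw [← Real.rpow_sub ht0]
        congr 1
        ring
      have h6 : t ^ r / t ^ (r/2) ≤ t ^ r / L ^ β :=
        div_le_div_of_nonneg_left (Real.rpow_nonneg ht0.le r) hLβ hE1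
      rw [h5] at h6
      exact h6
    have hslb : t ^ (r/2) ≤ s := le_trans hs₀lb hcase.le
    have hlogs : r / 4 * L ≤ Real.log (Real.exp 1 + s) := by
      have l1 : L / 2 ≤ Real.log t := by
        have e1 : Real.exp 1 + t ≤ 2 * t := by linarith
        have l2 : L ≤ Real.log (2 * t) := Real.log_le_log (by positivity) e1
        rw [Real.log_mul two_ne_zero ht0.ne'] at l2
        have l3 : Real.log 2 ≤ Real.log t := Real.log_le_log two_pos (by linarith)
        linarith
      have l4 : (r/2) * Real.log t ≤ Real.log s := by
        have := Real.log_le_log (Real.rpow_pos_of_pos ht0 (r/2)) hslb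
        rwa [Real.log_rpow ht0] at this
      have l5 : Real.log s ≤ Real.log (Real.exp 1 + s) :=
        Real.log_le_log hs (by linarith [Real.exp_pos 1])
      have l6 : (r/2) * (L/2) ≤ (r/2) * Real.log t :=
        mul_le_mul_of_nonneg_left l1 (by positivity)
      calc r / 4 * L = (r/2) * (L/2) := by ring
      _ ≤ Real.log s := le_trans l6 l4
      _ ≤ _ := l5
    set K : ℝ := (r/4 * L) ^ α with hKdef
    have hrL : (0:ℝ) < r/4 * L := by positivity
    have hK : 0 < K := Real.rpow_pos_of_pos hrL α
    have hAK : K * s ^ p ≤ A' p δ s := by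
      unfold A'
      rw [mul_comm]
      exact mul_le_mul_of_nonneg_left
        (Real.rpow_le_rpow hrL.le hlogs hα.le) (Real.rpow_nonneg hs.le p)
    have hy := Real.young_inequality_of_nonneg
      (mul_nonneg (Real.rpow_nonneg hK.le p⁻¹) hs.le)
      (mul_nonneg (Real.rpow_nonneg hK.le (-p⁻¹)) ht0.le) hpq
    have hKK : K ^ (p⁻¹) * K ^ (-p⁻¹) = 1 := by
      rw [← Real.rpow_add hK]; simp
    have hab : K ^ (p⁻¹) * s * (K ^ (-p⁻¹) * t) = s * t := by
      calc K ^ (p⁻¹) * s * (K ^ (-p⁻¹) * t) = K ^ (p⁻¹) * K ^ (-p⁻¹) * (s * t) := by ring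
      _ = s * t := by rw [hKK, one_mul]
    have hap : (K ^ (p⁻¹) * s) ^ p = K * s ^ p := by
      rw [Real.mul_rpow (Real.rpow_nonneg hK.le _) hs.le,
        ← Real.rpow_mul hK.le, inv_mul_cancel₀ (by positivity : p ≠ 0), Real.rpow_one]
    have hbq : (K ^ (-p⁻¹) * t) ^ (p/(p-1)) = K ^ (-r) * t ^ (p/(p-1)) := by
      rw [Real.mul_rpow (Real.rpow_nonneg hK.le _) ht0.le, ← Real.rpow_mul hK.le]
      congr 2
      rw [hrdef]
      field_simp
    rw [hab, hap, hbq] at hy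
    have h1 : K * s ^ p / p ≤ K * s ^ p :=
      div_le_self (by positivity) hp.le
    have h2 : K ^ (-r) * t ^ (p/(p-1)) / (p/(p-1)) ≤ K ^ (-r) * t ^ (p/(p-1)) :=
      div_le_self (by positivity) hpq.symm.lt.le
    have hfin : K ^ (-r) * t ^ (p/(p-1)) ≤ C * t ^ (p/(p-1)) / L ^ β := by
      have k1 : K ^ (-r) = (r/4) ^ (-β) * L ^ (-β) := by
        rw [hKdef, ← Real.rpow_mul hrL.le,
          show α * (-r) = -β by rw [hβdef, hrdef]; field_simp,
          Real.mul_rpow (by positivity) hL0.le]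
      have k2 : L ^ (-β) = (L ^ β)⁻¹ := Real.rpow_neg hL0.le β
      have k3 : (r/4) ^ (-β) ≤ C := le_max_right _ _
      calc K ^ (-r) * t ^ (p/(p-1)) = (r/4) ^ (-β) * t ^ (p/(p-1)) * (L ^ β)⁻¹ := by
            rw [k1, k2]; ring
      _ ≤ C * t ^ (p/(p-1)) * (L ^ β)⁻¹ := by
            gcongr
      _ = C * t ^ (p/(p-1)) / L ^ β := by rw [div_eq_mul_inv (C * t ^ (p/(p-1)))]
    have : A' p δ s = A' p δ s := rfl
    linarith

/-- Monotone extension used for measurability. -/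
noncomputable def g (p δ t : ℝ) : ℝ := sSup (S p δ (max t 1))

lemma g_mono {p δ : ℝ} (hp : 1 < p) (hδ : 0 < δ) : Monotone (g p δ) := by
  intro a b hab
  apply Real.sSup_le
  · rintro y ⟨s, hs, rfl⟩
    have h1 : s * max a 1 - A' p δ s ≤ s * max b 1 - A' p δ s := by
      have := mul_le_mul_of_nonneg_left (max_le_max hab (le_refl (1:ℝ))) hs.le
      linarith
    exact h1.trans (le_csSup
      (bddAbove_S hp hδ (le_trans zero_le_one (le_max_right b 1))) ⟨s, hs, rfl⟩)
  · exact sSup_S_nonneg hp hδ (le_max_right b 1)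

lemma g_nonneg {p δ : ℝ} (hp : 1 < p) (hδ : 0 < δ) (t : ℝ) : 0 ≤ g p δ t :=
  sSup_S_nonneg hp hδ (le_max_right t 1)

lemma g_eq {p δ t : ℝ} (ht : 1 ≤ t) : g p δ t = sSup (S p δ t) := by
  unfold g
  rw [max_eq_left ht]

lemma g_le_rpow {p δ t : ℝ} (hp : 1 < p) (hδ : 0 < δ) (ht : 1 ≤ t) :
    g p δ t ≤ t ^ (p / (p-1)) := by
  rw [g_eq ht]
  apply Real.sSup_le
  · rintro y ⟨s, hs, rfl⟩
    exact crude hp hδ (by linarith) hs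
  · exact Real.rpow_nonneg (by linarith) _

lemma tail_integrable {ν T : ℝ} (hν : 0 < ν) (hT : 0 ≤ T) :
    IntegrableOn
      (fun t : ℝ => (Real.exp 1 + t)⁻¹ * Real.log (Real.exp 1 + t) ^ (-(ν+1)))
      (Ioi T) := by
  have hderiv : ∀ x ∈ Ici T,
      HasDerivAt (fun t : ℝ => -ν⁻¹ * Real.log (Real.exp 1 + t) ^ (-ν))
        ((Real.exp 1 + x)⁻¹ * Real.log (Real.exp 1 + x) ^ (-(ν+1))) x := by
    intro x hx
    have hx0 : (0:ℝ) ≤ x := le_trans hT hx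
    have hex : (0:ℝ) < Real.exp 1 + x := by positivity
    have hL : 0 < Real.log (Real.exp 1 + x) := lt_of_lt_of_le one_pos (one_le_logE hx0)
    have h1 : HasDerivAt (fun t : ℝ => Real.exp 1 + t) 1 x := (hasDerivAt_id x).const_add _
    have h2 : HasDerivAt Real.log (Real.exp 1 + x)⁻¹ (Real.exp 1 + x) :=
      Real.hasDerivAt_log hex.ne'
    have h3 : HasDerivAt (fun t : ℝ => Real.log (Real.exp 1 + t))
        ((Real.exp 1 + x)⁻¹ * 1) x := h2.comp x h1
    have h4 : HasDerivAt (fun y : ℝ => y ^ (-ν))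
        (-ν * Real.log (Real.exp 1 + x) ^ (-ν - 1)) (Real.log (Real.exp 1 + x)) :=
      Real.hasDerivAt_rpow_const (Or.inl hL.ne')
    have h5 := (h4.comp x h3).const_mul (-ν⁻¹)
    convert h5 using 1
    · rfl
    · rfl
    · rfl
    rw [show -(ν+1) = -ν - 1 by ring]
    have hνne : ν ≠ 0 := hν.ne'
    field_simp
  have htend : Tendsto (fun t : ℝ => -ν⁻¹ * Real.log (Real.exp 1 + t) ^ (-ν)) atTop
      (nhds 0) := by
    have t1 : Tendsto (fun t : ℝ => Real.exp 1 + t) atTop atTop :=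
      tendsto_atTop_add_const_left atTop _ tendsto_id
    have t2 := Real.tendsto_log_atTop.comp t1
    have t3 := (tendsto_rpow_neg_atTop hν).comp t2
    have t4 := t3.const_mul (-ν⁻¹)
    simpa using t4
  apply integrableOn_Ioi_deriv_of_nonneg' hderiv _ htend
  intro x hx
  have hx0 : (0:ℝ) ≤ x := le_trans hT (le_of_lt hx)
  have hex : (0:ℝ) < Real.exp 1 + x := by positivity
  have hL : (0:ℝ) ≤ Real.log (Real.exp 1 + x) := by linarith [one_le_logE hx0]
  exact mul_nonneg (inv_nonneg.2 hex.le) (Real.rpow_nonneg hL _)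

lemma integrable_g (p δ : ℝ) (hp : 1 < p) (hδ : 0 < δ) :
    IntegrableOn (fun t : ℝ => g p δ t / t ^ (p/(p-1)) / t) (Ioi 1) := by
  obtain ⟨C, hC, T, hT3, hkey⟩ := key p δ hp hδ
  have hp1 : (0:ℝ) < p - 1 := by linarith
  have hq0 : (0:ℝ) < p / (p - 1) := by positivity
  have hgmeas : Measurable (g p δ) := (g_mono hp hδ).measurable
  have hfmeas : Measurable (fun t : ℝ => g p δ t / t ^ (p/(p-1)) / t) :=
    (hgmeas.div (Real.continuous_rpow_const hq0.le).measurable).div measurable_id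
  rw [show Ioi (1:ℝ) = Ioc 1 T ∪ Ioi T from (Ioc_union_Ioi_eq_Ioi (by linarith)).symm]
  apply IntegrableOn.union
  · -- bounded part
    apply Integrable.mono' (g := fun _ : ℝ => (1:ℝ))
    · exact integrableOn_const measure_Ioc_lt_top.ne
    · exact hfmeas.aestronglyMeasurable
    · rw [ae_restrict_iff' measurableSet_Ioc]
      filter_upwards with x hx
      have hx1 : (1:ℝ) < x := hx.1
      have hg0 : 0 ≤ g p δ x := g_nonneg hp hδ x
      have hub : g p δ x ≤ x ^ (p/(p-1)) := g_le_rpow hp hδ hx1.le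
      have hxq : (0:ℝ) < x ^ (p/(p-1)) := Real.rpow_pos_of_pos (by linarith) _
      rw [Real.norm_eq_abs, abs_of_nonneg (by positivity)]
      rw [div_div]
      apply div_le_one_of_le₀
      · calc g p δ x ≤ x ^ (p/(p-1)) := hub
        _ ≤ x ^ (p/(p-1)) * x := le_mul_of_one_le_right hxq.le hx1.le
      · positivity
  · -- tail part
    set ν : ℝ := δ / (p-1) with hνdef
    have hν : 0 < ν := by positivity
    have hβν : (p - 1 + δ) / (p - 1) = ν + 1 := by
      rw [hνdef]; field_simp; ring
    apply Integrable.mono'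
      (g := fun t : ℝ => (C * (Real.exp 1 + 1)) *
        ((Real.exp 1 + t)⁻¹ * Real.log (Real.exp 1 + t) ^ (-(ν+1))))
    · exact (tail_integrable hν (by linarith)).const_mul _
    · exact hfmeas.aestronglyMeasurable
    · rw [ae_restrict_iff' measurableSet_Ioi]
      filter_upwards with x hx
      have hxT : T ≤ x := le_of_lt hx
      have hx1 : (1:ℝ) < x := by linarith
      have hx0 : (0:ℝ) < x := by linarith
      set L : ℝ := Real.log (Real.exp 1 + x) with hLdef
      have hL1 : 1 ≤ L := one_le_logE (by linarith)
      have hL0 : (0:ℝ) < L := by linarith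
      have hLβ : (0:ℝ) < L ^ ((p - 1 + δ) / (p - 1)) := Real.rpow_pos_of_pos hL0 _
      have hg0 : 0 ≤ g p δ x := g_nonneg hp hδ x
      have hub : g p δ x ≤ C * x ^ (p/(p-1)) / L ^ ((p - 1 + δ) / (p - 1)) := by
        rw [g_eq hx1.le]
        apply Real.sSup_le
        · rintro y ⟨s, hs, rfl⟩
          exact hkey x hxT s hs
        · exact div_nonneg (mul_nonneg hC.le (Real.rpow_nonneg hx0.le _)) hLβ.le
      have hxq : (0:ℝ) < x ^ (p/(p-1)) := Real.rpow_pos_of_pos hx0 _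
      rw [Real.norm_eq_abs, abs_of_nonneg (by positivity)]
      have step1 : g p δ x / x ^ (p/(p-1)) / x ≤
          C * x ^ (p/(p-1)) / L ^ ((p - 1 + δ) / (p - 1)) / x ^ (p/(p-1)) / x := by
        gcongr
      have step2 : C * x ^ (p/(p-1)) / L ^ ((p - 1 + δ) / (p - 1)) / x ^ (p/(p-1)) / x
          = C * x⁻¹ * (L ^ ((p - 1 + δ) / (p - 1)))⁻¹ := by
        field_simp
      have hinv : x⁻¹ ≤ (Real.exp 1 + 1) * (Real.exp 1 + x)⁻¹ := by
        have hex : (0:ℝ) < Real.exp 1 + x := by positivity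
        rw [inv_eq_one_div, show (Real.exp 1 + 1) * (Real.exp 1 + x)⁻¹
          = (Real.exp 1 + 1) / (Real.exp 1 + x) by rw [div_eq_mul_inv],
          div_le_div_iff₀ hx0 hex]
        nlinarith [Real.exp_pos 1]
      have step3 : C * x⁻¹ * (L ^ ((p - 1 + δ) / (p - 1)))⁻¹ ≤
          (C * (Real.exp 1 + 1)) * ((Real.exp 1 + x)⁻¹ * L ^ (-(ν+1))) := by
        have e1 : L ^ (-(ν+1)) = (L ^ ((p - 1 + δ) / (p - 1)))⁻¹ := by
          rw [← hβν, Real.rpow_neg hL0.le]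
        rw [e1]
        have e2 : C * x⁻¹ ≤ C * ((Real.exp 1 + 1) * (Real.exp 1 + x)⁻¹) :=
          mul_le_mul_of_nonneg_left hinv hC.le
        calc C * x⁻¹ * (L ^ ((p - 1 + δ) / (p - 1)))⁻¹
            ≤ C * ((Real.exp 1 + 1) * (Real.exp 1 + x)⁻¹) *
              (L ^ ((p - 1 + δ) / (p - 1)))⁻¹ :=
              mul_le_mul_of_nonneg_right e2 (inv_nonneg.2 hLβ.le)
        _ = (C * (Real.exp 1 + 1)) * ((Real.exp 1 + x)⁻¹ *
              (L ^ ((p - 1 + δ) / (p - 1)))⁻¹) := by ring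
      calc g p δ x / x ^ (p/(p-1)) / x ≤ C * x⁻¹ * (L ^ ((p - 1 + δ) / (p - 1)))⁻¹ := by
            rw [← step2]; exact step1
      _ ≤ _ := step3

end CompLogBump

/-- If `A(t) = t^p log(e+t)^(p-1+δ)` with `1 < p` and `δ > 0`, then the complementary
Young function `Ā(t) = sup_{s>0} (st − A(s))` satisfies the `B_{p'}` condition. -/
theorem complementary_log_bump_in_Bp' (p δ : ℝ) (hp : 1 < p) (hδ : 0 < δ)
    (A Abar : ℝ → ℝ)
    (hA : ∀ t : ℝ, 0 ≤ t → A t = t ^ p * Real.log (Real.exp 1 + t) ^ (p - 1 + δ))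
    (hAbar : ∀ t : ℝ, 0 ≤ t →
      Abar t = sSup {y : ℝ | ∃ s : ℝ, 0 < s ∧ y = s * t - A s}) :
    MeasureTheory.IntegrableOn
      (fun t : ℝ => Abar t / t ^ (p / (p - 1)) / t) (Set.Ioi 1) := by
  have hmain := CompLogBump.integrable_g p δ hp hδ
  apply hmain.congr_fun _ measurableSet_Ioi
  intro t ht
  have ht1 : (1:ℝ) < t := ht
  have hset : {y : ℝ | ∃ s : ℝ, 0 < s ∧ y = s * t - A s} = CompLogBump.S p δ t := by
    ext y
    constructor
    · rintro ⟨s, hs, rfl⟩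
      exact ⟨s, hs, by rw [hA s hs.le]; rfl⟩
    · rintro ⟨s, hs, rfl⟩
      exact ⟨s, hs, by rw [hA s hs.le]; rfl⟩
  have habar : CompLogBump.g p δ t = Abar t := by
    rw [hAbar t (by linarith), hset, CompLogBump.g_eq ht1.le]
  simp only [habar]
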